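/- Let C be a set of symmetric positive definite n×n matrices, L a linear subspace of R^n with dim(L) = l < n, and let L(Σ) = Π_{L⊥} Σ Π_{L⊥} / ‖Π_{L⊥} Σ Π_{L⊥}‖. Suppose Σ̄ is a limit of a sequence L(Σ_m) with Σ_m ∈ C and rank(Σ̄) < n − l. Then the sequence Σ_m^♯ := L(Σ_m) + λ_{l+1}(L(Σ_m))·Π_L converges to Σ̄, i.e., Σ̄ lies in the closure of the set C^♯ := {Σ^♯ : Σ ∈ C}, and Σ̄ is singular. -/

import Mathlib

open Matrix Filter

/-- The `i`-th smallest eigenvalue (0-based, counted with multiplicity) of a real matrix;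
junk value `0` if the matrix is not Hermitian. -/
noncomputable def nthSmallestEigenvalue {n : ℕ} (A : Matrix (Fin n) (Fin n) ℝ) (i : ℕ) : ℝ :=
  if hA : A.IsHermitian then
    (Multiset.sort (↑(List.ofFn hA.eigenvalues)) (· ≤ ·)).getD i 0
  else 0

/-- `P` is the orthogonal projection (matrix) onto the subspace `L` of `ℝⁿ`. -/
def IsProjOnto {n : ℕ} (P : Matrix (Fin n) (Fin n) ℝ) (L : Submodule ℝ (Fin n → ℝ)) : Prop :=
  Pᵀ = P ∧ P * P = P ∧ (∀ x, P.mulVec x ∈ L) ∧ ∀ x ∈ L, P.mulVec x = x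

/-- `ν` is a norm on `n × n` real matrices. -/
def IsMatrixNorm {n : ℕ} (ν : Matrix (Fin n) (Fin n) ℝ → ℝ) : Prop :=
  (∀ A, 0 ≤ ν A) ∧ (∀ A, ν A = 0 ↔ A = 0) ∧
  (∀ (r : ℝ) A, ν (r • A) = |r| * ν A) ∧ ∀ A B, ν (A + B) ≤ ν A + ν B

/-! ### Auxiliary lemmas -/

lemma aux_sorted_getD_le {s : List ℝ} (hs : s.Pairwise (· ≤ ·)) {k : ℕ} (hk : k < s.length) {ε : ℝ}
    (hc : k + 1 ≤ s.countP (fun x => decide (x ≤ ε))) : s.getD k 0 ≤ ε := by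
  by_contra h
  push_neg at h
  have hd : s.drop k = s.getD k 0 :: s.drop (k+1) := by
    rw [List.getD_eq_getElem s 0 hk]
    exact List.drop_eq_getElem_cons hk
  have hsd : (s.drop k).Pairwise (· ≤ ·) := hs.sublist (List.drop_sublist k s)
  have hdropzero : (s.drop k).countP (fun x => decide (x ≤ ε)) = 0 := by
    rw [List.countP_eq_zero]
    intro a ha
    have : s.getD k 0 ≤ a := by
      rw [hd] at ha hsd
      rcases List.mem_cons.1 ha with rfl | ha
      · exact le_refl _
      · exact (List.pairwise_cons.1 hsd).1 a ha
    simp only [decide_eq_true_eq]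
    intro hle
    exact absurd (le_trans this hle) (not_le.2 h)
  have htd := List.take_append_drop k s
  have hcount : s.countP (fun x => decide (x ≤ ε)) =
      (s.take k).countP (fun x => decide (x ≤ ε)) + (s.drop k).countP (fun x => decide (x ≤ ε)) := by
    conv_lhs => rw [← htd]
    rw [List.countP_append]
  have h1 : (s.take k).countP (fun x => decide (x ≤ ε)) ≤ k :=
    le_trans List.countP_le_length (List.length_take_le _ _)
  omega

lemma aux_count_le_countP_ofFn {n : ℕ} (f : Fin n → ℝ) (q : ℝ → Bool) (S : Finset (Fin n))
    (hS : ∀ i ∈ S, q (f i)) : S.card ≤ (List.ofFn f).countP q := by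
  rw [List.ofFn_eq_map, List.countP_map, List.countP_eq_length_filter]
  have h2 : ∀ i ∈ S, i ∈ (List.finRange n).filter (q ∘ f) := by
    intro i hi
    rw [List.mem_filter]
    exact ⟨List.mem_finRange i, by simpa using hS i hi⟩
  calc S.card = S.val.card := rfl
    _ ≤ _ := by
        have : S.val ≤ ↑((List.finRange n).filter (q ∘ f)) := by
          rw [Multiset.le_iff_count]
          intro a
          by_cases ha : a ∈ S
          · rw [Multiset.count_eq_one_of_mem S.nodup ha, Multiset.one_le_count_iff_mem]
            exact h2 a ha
          · simp [Multiset.count_eq_zero_of_notMem, ha]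
        simpa using Multiset.card_le_card this

lemma aux_nth_le_of_count {n : ℕ} {A : Matrix (Fin n) (Fin n) ℝ} (hA : A.IsHermitian)
    {k : ℕ} (hk : k < n) {ε : ℝ} (S : Finset (Fin n)) (hS : k + 1 ≤ S.card)
    (hSle : ∀ i ∈ S, hA.eigenvalues i ≤ ε) :
    nthSmallestEigenvalue A k ≤ ε := by
  rw [nthSmallestEigenvalue, dif_pos hA]
  set s : List ℝ := Multiset.sort (↑(List.ofFn hA.eigenvalues)) (· ≤ ·) with hs
  have hperm : s.Perm (List.ofFn hA.eigenvalues) := by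
    rw [← Multiset.coe_eq_coe, Multiset.sort_eq]
  have hlen : s.length = n := by rw [hperm.length_eq, List.length_ofFn]
  apply aux_sorted_getD_le (Multiset.pairwise_sort _ _) (by rw [← hs, hlen]; omega)
  rw [hperm.countP_eq]
  exact le_trans (by omega : k + 1 ≤ S.card)
    (aux_count_le_countP_ofFn _ _ S (fun i hi => by simpa using hSle i hi))

lemma aux_nth_nonneg {n : ℕ} {A : Matrix (Fin n) (Fin n) ℝ} (hA : A.PosSemidef)
    {k : ℕ} (hk : k < n) : 0 ≤ nthSmallestEigenvalue A k := by
  rw [nthSmallestEigenvalue, dif_pos hA.1]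
  set s : List ℝ := Multiset.sort (↑(List.ofFn hA.1.eigenvalues)) (· ≤ ·) with hs
  have hperm : s.Perm (List.ofFn hA.1.eigenvalues) := by
    rw [← Multiset.coe_eq_coe, Multiset.sort_eq]
  have hlen : s.length = n := by rw [hperm.length_eq, List.length_ofFn]
  have hkl : k < s.length := by omega
  rw [List.getD_eq_getElem s 0 hkl]
  have hmem : s[k] ∈ s := List.getElem_mem hkl
  have hmem2 := hperm.mem_iff.1 hmem
  rw [List.mem_ofFn] at hmem2
  obtain ⟨i, hi⟩ := hmem2
  rw [← hi]
  exact hA.eigenvalues_nonneg i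

lemma aux_inner_eq_dot {n : ℕ} (a b : EuclideanSpace ℝ (Fin n)) :
    (inner ℝ a b : ℝ) = (a : Fin n → ℝ) ⬝ᵥ (b : Fin n → ℝ) := by
  simp [PiLp.inner_apply, RCLike.inner_apply, dotProduct, mul_comm]

lemma aux_quad_expand {n : ℕ} {A : Matrix (Fin n) (Fin n) ℝ} (hA : A.IsHermitian)
    (x : EuclideanSpace ℝ (Fin n)) :
    (x : Fin n → ℝ) ⬝ᵥ A *ᵥ (x : Fin n → ℝ) =
      ∑ i, hA.eigenvalues i * (hA.eigenvectorBasis.repr x i)^2 := by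
  set b := hA.eigenvectorBasis with hb
  have hx : (x : Fin n → ℝ) = ∑ i, b.repr x i • (b i : Fin n → ℝ) := by have := congrArg (WithLp.ofLp (p := 2)) (b.sum_repr x).symm; simpa using this
  have expand : A *ᵥ (x : Fin n → ℝ) = ∑ i, (hA.eigenvalues i * b.repr x i) • (b i : Fin n → ℝ) := by
    conv_lhs => rw [hx, ← A.mulVecLin_apply, map_sum]
    refine Finset.sum_congr rfl fun i _ => ?_
    rw [_root_.map_smul, A.mulVecLin_apply,
      show A *ᵥ (b i : Fin n → ℝ) = hA.eigenvalues i • (b i : Fin n → ℝ) from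
        hA.mulVec_eigenvectorBasis i,
      smul_smul, mul_comm]
  have key : (x : Fin n → ℝ) ⬝ᵥ A *ᵥ (x : Fin n → ℝ)
      = (inner ℝ x (∑ i, (hA.eigenvalues i * b.repr x i) • b i : EuclideanSpace ℝ (Fin n)) : ℝ) := by
    rw [aux_inner_eq_dot, expand]; simp only [WithLp.ofLp_sum, WithLp.ofLp_smul]
  have hinner : ∀ i, (inner ℝ x (b i) : ℝ) = b.repr x i := fun i => by
    rw [real_inner_comm, ← b.repr_apply_apply]
  rw [key, inner_sum]
  refine Finset.sum_congr rfl fun i _ => ?_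
  rw [real_inner_smul_right, hinner]; ring

lemma aux_self_dot {n : ℕ} {A : Matrix (Fin n) (Fin n) ℝ} (hA : A.IsHermitian)
    (x : EuclideanSpace ℝ (Fin n)) :
    (x : Fin n → ℝ) ⬝ᵥ (x : Fin n → ℝ) = ∑ i, (hA.eigenvectorBasis.repr x i)^2 := by
  set b := hA.eigenvectorBasis with hb
  rw [← aux_inner_eq_dot, ← b.sum_inner_mul_inner x x]
  refine Finset.sum_congr rfl fun i _ => ?_
  rw [show (inner ℝ x (b i) : ℝ) = b.repr x i from by rw [real_inner_comm, ← b.repr_apply_apply],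
    ← b.repr_apply_apply]
  ring

lemma aux_quadform_count {n : ℕ} {A : Matrix (Fin n) (Fin n) ℝ} (hA : A.IsHermitian) {ε : ℝ}
    {V : Submodule ℝ (EuclideanSpace ℝ (Fin n))} {k : ℕ}
    (hk : k < n) (hV : k + 1 ≤ Module.finrank ℝ V)
    (hq : ∀ x : EuclideanSpace ℝ (Fin n), x ∈ V →
      (x : Fin n → ℝ) ⬝ᵥ A *ᵥ (x : Fin n → ℝ) ≤ ε * ((x : Fin n → ℝ) ⬝ᵥ (x : Fin n → ℝ))) :
    nthSmallestEigenvalue A k ≤ ε := by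
  classical
  set S : Finset (Fin n) := Finset.univ.filter (fun i => hA.eigenvalues i ≤ ε) with hSdef
  refine aux_nth_le_of_count hA hk S ?_ (fun i hi => (Finset.mem_filter.1 hi).2)
  by_contra hcard
  push_neg at hcard
  set T := Sᶜ with hTdef
  have hTcard : n - k ≤ T.card := by
    rw [hTdef, Finset.card_compl, Fintype.card_fin]
    omega
  set b := hA.eigenvectorBasis with hb
  set f : {i // i ∈ T} → EuclideanSpace ℝ (Fin n) := ⇑b ∘ Subtype.val with hf
  set W : Submodule ℝ (EuclideanSpace ℝ (Fin n)) := Submodule.span ℝ (Set.range f) with hW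
  have hWrank : Module.finrank ℝ W = T.card := by
    rw [hW, hf, finrank_span_eq_card (b.orthonormal.linearIndependent.comp _ Subtype.val_injective)]
    exact Fintype.card_coe T
  have hsup : Module.finrank ℝ ↥(V ⊔ W : Submodule ℝ (EuclideanSpace ℝ (Fin n))) ≤ n := by
    refine le_trans (Submodule.finrank_le _) ?_
    rw [finrank_euclideanSpace, Fintype.card_fin]
  have hinf : 0 < Module.finrank ℝ (V ⊓ W : Submodule ℝ (EuclideanSpace ℝ (Fin n))) := by
    have := Submodule.finrank_sup_add_finrank_inf_eq V W
    omega
  have hne : (V ⊓ W : Submodule ℝ (EuclideanSpace ℝ (Fin n))) ≠ ⊥ := by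
    intro h
    rw [h, finrank_bot] at hinf
    omega
  obtain ⟨x, hxmem, hxne⟩ := Submodule.exists_mem_ne_zero_of_ne_bot hne
  have hxV : x ∈ V := hxmem.1
  have hxW : x ∈ W := hxmem.2
  have hzero : ∀ i ∈ S, b.repr x i = 0 := by
    intro i hi
    have hiT : i ∉ T := by simp [hTdef, hi]
    have hle : W ≤ (ℝ ∙ (b i))ᗮ := by
      rw [hW, Submodule.span_le]
      rintro _ ⟨j, rfl⟩
      simp only [hf, Function.comp_apply]
      rw [SetLike.mem_coe, Submodule.mem_orthogonal_singleton_iff_inner_right]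
      have : (j : Fin n) ≠ i := fun h => hiT (h ▸ j.2)
      exact b.orthonormal.2 (Ne.symm this)
    have hmem := hle hxW
    rw [Submodule.mem_orthogonal_singleton_iff_inner_right] at hmem
    rw [b.repr_apply_apply, hmem]
  have hquad := hq x hxV
  rw [aux_quad_expand hA x, aux_self_dot hA x] at hquad
  have hpos : (0:ℝ) < ∑ i, (b.repr x i)^2 := by
    have h1 : (0:ℝ) < inner ℝ x x := by
      have h2 : (inner ℝ x x : ℝ) ≠ 0 := fun h => hxne ((@inner_self_eq_zero ℝ _ _ _ _ x).1 h)
      have h3 := real_inner_self_nonneg (x := x)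
      exact lt_of_le_of_ne h3 (Ne.symm h2)
    rw [aux_inner_eq_dot, aux_self_dot hA x] at h1
    exact h1
  have hex : ∃ i ∈ Finset.univ, (0:ℝ) < (hA.eigenvalues i - ε) * (b.repr x i)^2 := by
    obtain ⟨i, -, hi⟩ := Finset.exists_lt_of_sum_lt (by simpa using hpos :
      (∑ _i : Fin n, (0:ℝ)) < ∑ i, (b.repr x i)^2)
    have hci : b.repr x i ≠ 0 := fun h => by simp [h] at hi
    have hiS : i ∉ S := fun h => hci (hzero i h)
    have : ε < hA.eigenvalues i := by
      by_contra hle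
      exact hiS (Finset.mem_filter.2 ⟨Finset.mem_univ _, not_lt.1 hle⟩)
    exact ⟨i, Finset.mem_univ _, mul_pos (by linarith) (by positivity)⟩
  have hterm : ∀ i ∈ Finset.univ, (0:ℝ) ≤ (hA.eigenvalues i - ε) * (b.repr x i)^2 := by
    intro i _
    by_cases hiS : i ∈ S
    · simp [hzero i hiS]
    · have : ε < hA.eigenvalues i := by
        by_contra hle
        exact hiS (Finset.mem_filter.2 ⟨Finset.mem_univ _, not_lt.1 hle⟩)
      exact mul_nonneg (by linarith) (by positivity)
  have hsumpos : (0:ℝ) < ∑ i, (hA.eigenvalues i - ε) * (b.repr x i)^2 := by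
    obtain ⟨i, hi, hip⟩ := hex
    exact Finset.sum_pos' hterm ⟨i, hi, hip⟩
  have hexpand : ∑ i, (hA.eigenvalues i - ε) * (b.repr x i)^2
      = (∑ i, hA.eigenvalues i * (b.repr x i)^2) - ε * ∑ i, (b.repr x i)^2 := by
    rw [Finset.mul_sum, ← Finset.sum_sub_distrib]
    exact Finset.sum_congr rfl fun i _ => by ring
  rw [hexpand] at hsumpos
  linarith

noncomputable def mnorm {n : ℕ} (B : Matrix (Fin n) (Fin n) ℝ) : ℝ := ∑ i, ∑ j, |B i j|

lemma mnorm_nonneg {n : ℕ} (B : Matrix (Fin n) (Fin n) ℝ) : 0 ≤ mnorm B :=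
  Finset.sum_nonneg fun _ _ => Finset.sum_nonneg fun _ _ => abs_nonneg _

lemma mnorm_continuous {n : ℕ} : Continuous (mnorm (n := n)) := by
  unfold mnorm
  refine continuous_finset_sum _ fun i _ => continuous_finset_sum _ fun j _ => ?_
  exact ((continuous_apply j).comp (continuous_apply i)).abs

lemma aux_psd_smul {n : ℕ} {M : Matrix (Fin n) (Fin n) ℝ} (hM : M.PosSemidef) {c : ℝ}
    (hc : 0 ≤ c) : (c • M).PosSemidef := by
  constructor
  · unfold Matrix.IsHermitian
    rw [conjTranspose_smul, hM.1]
    simp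
  · intro x
    exact (hM.smul hc).2 x

lemma aux_dot_le_bound {n : ℕ} (B : Matrix (Fin n) (Fin n) ℝ) (x : Fin n → ℝ) :
    x ⬝ᵥ B *ᵥ x ≤ mnorm B * (x ⬝ᵥ x) := by
  have step1 : x ⬝ᵥ B *ᵥ x = ∑ i, ∑ j, x i * (B i j * x j) := by
    simp [dotProduct, mulVec, Finset.mul_sum]
  have hdot : ∀ i j : Fin n, |x i| * |x j| ≤ x ⬝ᵥ x := by
    intro i j
    have h1 : x i ^ 2 ≤ ∑ k, x k ^ 2 :=
      Finset.single_le_sum (fun k _ => sq_nonneg (x k)) (Finset.mem_univ i)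
    have h2 : x j ^ 2 ≤ ∑ k, x k ^ 2 :=
      Finset.single_le_sum (fun k _ => sq_nonneg (x k)) (Finset.mem_univ j)
    have hd : x ⬝ᵥ x = ∑ k, x k ^ 2 := by
      simp [dotProduct, sq]
    rw [hd]
    nlinarith [sq_nonneg (|x i| - |x j|), sq_abs (x i), sq_abs (x j)]
  have step2 : ∀ i j : Fin n, x i * (B i j * x j) ≤ |B i j| * (x ⬝ᵥ x) := by
    intro i j
    calc x i * (B i j * x j) ≤ |x i * (B i j * x j)| := le_abs_self _
      _ = |B i j| * (|x i| * |x j|) := by rw [abs_mul, abs_mul]; ring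
      _ ≤ |B i j| * (x ⬝ᵥ x) := mul_le_mul_of_nonneg_left (hdot i j) (abs_nonneg _)
  calc x ⬝ᵥ B *ᵥ x ≤ ∑ i, ∑ j, |B i j| * (x ⬝ᵥ x) := by
        rw [step1]
        exact Finset.sum_le_sum fun i _ => Finset.sum_le_sum fun j _ => step2 i j
    _ = mnorm B * (x ⬝ᵥ x) := by
        rw [mnorm, Finset.sum_mul]
        exact Finset.sum_congr rfl fun i _ => by rw [Finset.sum_mul]

theorem stmt_3 {n l : ℕ} (hln : l < n)
    (L : Submodule ℝ (Fin n → ℝ)) (hL : Module.finrank ℝ L = l)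
    (C : Set (Matrix (Fin n) (Fin n) ℝ)) (hC : ∀ A ∈ C, A.PosDef)
    (P : Matrix (Fin n) (Fin n) ℝ) (hP : IsProjOnto P L)
    (ν : Matrix (Fin n) (Fin n) ℝ → ℝ) (hν : IsMatrixNorm ν)
    (LS : Matrix (Fin n) (Fin n) ℝ → Matrix (Fin n) (Fin n) ℝ)
    (hLS : ∀ A, LS A =
      (ν (((1 : Matrix (Fin n) (Fin n) ℝ) - P) * A * ((1 : Matrix (Fin n) (Fin n) ℝ) - P)))⁻¹ •
        (((1 : Matrix (Fin n) (Fin n) ℝ) - P) * A * ((1 : Matrix (Fin n) (Fin n) ℝ) - P)))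
    (Sbar : Matrix (Fin n) (Fin n) ℝ)
    (Sm : ℕ → Matrix (Fin n) (Fin n) ℝ) (hSm : ∀ m, Sm m ∈ C)
    (hconv : Tendsto (fun m => LS (Sm m)) atTop (nhds Sbar))
    (hrank : Sbar.rank < n - l) :
    Tendsto (fun m => LS (Sm m) + nthSmallestEigenvalue (LS (Sm m)) l • P)
      atTop (nhds Sbar) ∧
    Sbar ∈ closure {B | ∃ A ∈ C, B = LS A + nthSmallestEigenvalue (LS A) l • P} ∧
    Sbar.det = 0 := by
  have hQherm : ((1 : Matrix (Fin n) (Fin n) ℝ) - P)ᴴ = 1 - P := by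
    rw [conjTranspose_eq_transpose_of_trivial, transpose_sub, transpose_one, hP.1]
  have hLSpsd : ∀ A ∈ C, (LS A).PosSemidef := by
    intro A hA
    rw [hLS A]
    refine aux_psd_smul ?_ (inv_nonneg.2 (hν.1 _))
    have := ((hC A hA).posSemidef).conjTranspose_mul_mul_same
      (B := (1 : Matrix (Fin n) (Fin n) ℝ) - P)
    rwa [hQherm] at this
  have hherm : ∀ m, (LS (Sm m)).IsHermitian := fun m => (hLSpsd _ (hSm m)).1
  -- kernel of Sbar as subspace of Euclidean space
  set V : Submodule ℝ (EuclideanSpace ℝ (Fin n)) := Submodule.map (WithLp.linearEquiv 2 ℝ (Fin n → ℝ)).symm.toLinearMap (LinearMap.ker Sbar.mulVecLin) with hV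
  have hVrank : l + 1 ≤ Module.finrank ℝ V := by
    rw [hV, LinearEquiv.finrank_map_eq]
    have h1 := LinearMap.finrank_range_add_finrank_ker (Sbar.mulVecLin)
    rw [Module.finrank_fin_fun] at h1
    have h2 : Sbar.rank = Module.finrank ℝ (LinearMap.range Sbar.mulVecLin) := rfl
    exact (by omega :
      l + 1 ≤ Module.finrank ℝ (LinearMap.ker Sbar.mulVecLin))
  have key : ∀ m, nthSmallestEigenvalue (LS (Sm m)) l ≤ mnorm (LS (Sm m) - Sbar) := by
    intro m
    refine aux_quadform_count (hherm m) hln hVrank ?_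
    intro x hx
    have hker : Sbar *ᵥ (x : Fin n → ℝ) = 0 := by
      exact LinearMap.mem_ker.1 ((Submodule.mem_map_equiv _).1 hx)
    have heq : (x : Fin n → ℝ) ⬝ᵥ (LS (Sm m)) *ᵥ (x : Fin n → ℝ)
        = (x : Fin n → ℝ) ⬝ᵥ (LS (Sm m) - Sbar) *ᵥ (x : Fin n → ℝ) := by
      rw [Matrix.sub_mulVec, hker, sub_zero]
    rw [heq]
    exact aux_dot_le_bound _ _
  have hnn : ∀ m, 0 ≤ nthSmallestEigenvalue (LS (Sm m)) l :=
    fun m => aux_nth_nonneg (hLSpsd _ (hSm m)) hln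
  have hb : Tendsto (fun m => mnorm (LS (Sm m) - Sbar)) atTop (nhds 0) := by
    have h1 : Tendsto (fun m => LS (Sm m) - Sbar) atTop (nhds 0) := by
      simpa using hconv.sub (tendsto_const_nhds (x := Sbar))
    have h2 := (mnorm_continuous.tendsto 0).comp h1
    have h3 : mnorm (0 : Matrix (Fin n) (Fin n) ℝ) = 0 := by simp [mnorm]
    rw [h3] at h2
    exact h2
  have hc0 : Tendsto (fun m => nthSmallestEigenvalue (LS (Sm m)) l) atTop (nhds 0) :=
    squeeze_zero hnn key hb
  have hsm : Tendsto (fun m => nthSmallestEigenvalue (LS (Sm m)) l • P) atTop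
      (nhds (0 : Matrix (Fin n) (Fin n) ℝ)) := by
    have := hc0.smul_const P
    simpa using this
  have hmain : Tendsto (fun m => LS (Sm m) + nthSmallestEigenvalue (LS (Sm m)) l • P)
      atTop (nhds Sbar) := by
    have := hconv.add hsm
    simpa using this
  refine ⟨hmain, ?_, ?_⟩
  · exact mem_closure_of_tendsto hmain (Eventually.of_forall fun m => ⟨Sm m, hSm m, rfl⟩)
  · by_contra hdet
    have hunit : IsUnit Sbar := (Matrix.isUnit_iff_isUnit_det Sbar).2 (isUnit_iff_ne_zero.2 hdet)
    have hr := Sbar.rank_of_isUnit hunit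
    rw [Fintype.card_fin] at hr
    omega
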